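/- Let n ≥ 1, k ≥ 0, m = 2n+k, and let s ∈ {-1,0,+1}^m be a sign vector with exactly k zeros such that s has a sign change at every zero (i.e., consecutive nonzero entries s_{i_j}, s_{i_{j+1}} at positions i_j < i_{j+1} satisfy s_{i_{j+1}} = (-1)^{i_{j+1}-i_j-1} s_{i_j}). Then the sets S_0(s) = {j : (-1)^j s_j = 1} and S_1(s) = {j : (-1)^j s_j = -1} are disjoint stable subsets of ℤ_m, each of cardinality n. -/
import Mathlib

open scoped Classical

private lemma even_card_range (n : ℕ) :
    ((Finset.range (2*n)).filter (fun i => Even i)).card = n := by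
  induction n with
  | zero => simp
  | succ n ih =>
    have h : 2 * (n+1) = (2*n) + 1 + 1 := by ring
    rw [h, Finset.range_add_one, Finset.range_add_one, Finset.filter_insert, Finset.filter_insert]
    rw [if_neg (by simp [Nat.even_add_one]), if_pos (even_two_mul n),
      Finset.card_insert_of_notMem (by simp), ih]

private lemma odd_card_range (n : ℕ) :
    ((Finset.range (2*n)).filter (fun i => ¬ Even i)).card = n := by
  have h := Finset.card_filter_add_card_filter_not
    (s := Finset.range (2*n)) (p := fun i => Even i)
  rw [even_card_range, Finset.card_range] at h
  omega

private lemma fin_even_card (N : ℕ) :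
    (Finset.univ.filter (fun i : Fin N => Even (i:ℕ))).card
      = ((Finset.range N).filter (fun i => Even i)).card := by
  have h1 : (Finset.range N).filter (fun i => Even i)
      = ((Finset.univ : Finset (Fin N)).map Fin.valEmbedding).filter (fun i => Even i) := by
    rw [Fin.map_valEmbedding_univ, Nat.Iio_eq_range]
  rw [h1, Finset.filter_map, Finset.card_map]
  rfl

private lemma fin_odd_card (N : ℕ) :
    (Finset.univ.filter (fun i : Fin N => ¬ Even (i:ℕ))).card
      = ((Finset.range N).filter (fun i => ¬ Even i)).card := by
  have h1 : (Finset.range N).filter (fun i => ¬ Even i)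
      = ((Finset.univ : Finset (Fin N)).map Fin.valEmbedding).filter (fun i => ¬ Even i) := by
    rw [Fin.map_valEmbedding_univ, Nat.Iio_eq_range]
  rw [h1, Finset.filter_map, Finset.card_map]
  rfl

private lemma pow_key (a b : ℕ) (hab : a < b) :
    (-1:ℤ)^b * (-1:ℤ)^(b-a-1) = -(-1:ℤ)^a := by
  have h2 : Odd (b + (b - a - 1) + a) := ⟨b - 1, by omega⟩
  have h3 : (-1:ℤ)^(b + (b-a-1) + a) = -1 := h2.neg_one_pow
  have h1 : (-1:ℤ)^a * (-1:ℤ)^a = 1 := by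
    rw [← pow_add]
    have hea : Even (a+a) := ⟨a, rfl⟩
    exact hea.neg_one_pow
  rw [pow_add, pow_add] at h3
  calc (-1:ℤ)^b * (-1:ℤ)^(b-a-1)
      = ((-1:ℤ)^b * (-1:ℤ)^(b-a-1) * (-1:ℤ)^a) * (-1:ℤ)^a := by
        rw [mul_assoc _ _ ((-1:ℤ)^a), h1, mul_one]
    _ = -(-1:ℤ)^a := by rw [h3]; ring

theorem stmt2 (n k m : ℕ) (hn : 1 ≤ n) (hm : m = 2 * n + k)
    (s : ℕ → ℤ)
    (hvals : ∀ j < m, s j = -1 ∨ s j = 0 ∨ s j = 1)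
    (hzeros : ((Finset.range m).filter fun j => s j = 0).card = k)
    (hsc : ∀ i j, i < j → j < m → s i ≠ 0 → s j ≠ 0 →
      (∀ l, i < l → l < j → s l = 0) → s j = (-1) ^ (j - i - 1) * s i) :
    let S0 : Finset ℕ := (Finset.range m).filter fun j => (-1 : ℤ) ^ j * s j = 1
    let S1 : Finset ℕ := (Finset.range m).filter fun j => (-1 : ℤ) ^ j * s j = -1
    Disjoint S0 S1 ∧ S0.card = n ∧ S1.card = n ∧
      (∀ i ∈ S0, (i + 1) % m ∉ S0) ∧ (∀ i ∈ S1, (i + 1) % m ∉ S1) := by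
  intro S0 S1
  classical
  set t : ℕ → ℤ := fun j => (-1:ℤ)^j * s j with ht
  have hm2 : 2 ≤ m := by omega
  set N : Finset ℕ := (Finset.range m).filter (fun j => ¬ s j = 0) with hNdef
  have hNmem : ∀ j, j ∈ N ↔ (j < m ∧ s j ≠ 0) := by
    intro j; rw [hNdef]; simp [Finset.mem_filter, Finset.mem_range]
  have hNcard : N.card = 2*n := by
    have h := Finset.card_filter_add_card_filter_not
      (s := Finset.range m) (p := fun j => s j = 0)
    rw [hzeros, Finset.card_range, ← hNdef] at h
    omega
  set e := N.orderIsoOfFin hNcard with he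
  have heMem : ∀ i : Fin (2*n), (e i : ℕ) < m ∧ s (e i) ≠ 0 := by
    intro i
    have := (e i).2
    rw [hNmem] at this
    exact this
  have hmono : ∀ i j : Fin (2*n), i < j → ((e i : ℕ) < (e j : ℕ)) := by
    intro i j hij
    exact Subtype.coe_lt_coe.mpr (e.strictMono hij)
  -- step lemma
  have hstep : ∀ (i : ℕ) (h : i + 1 < 2*n),
      t (e ⟨i+1, h⟩) = - t (e ⟨i, by omega⟩) := by
    intro i h
    have hi : i < 2*n := by omega
    set a := (e ⟨i, hi⟩ : ℕ) with ha
    set b := (e ⟨i+1, h⟩ : ℕ) with hb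
    have hab : a < b := hmono _ _ (Fin.mk_lt_mk.mpr (by omega))
    have hbm : b < m := (heMem _).1
    have hsa : s a ≠ 0 := (heMem _).2
    have hsb : s b ≠ 0 := (heMem _).2
    have hmid : ∀ l, a < l → l < b → s l = 0 := by
      intro l hal hlb
      by_contra hl
      have hlN : l ∈ N := (hNmem l).mpr ⟨hlb.trans hbm, hl⟩
      set j := e.symm ⟨l, hlN⟩ with hj
      have hej : (e j : ℕ) = l := by rw [hj]; simp
      have h1 : (⟨i, hi⟩ : Fin (2*n)) < j := by
        rw [← e.lt_iff_lt, ← Subtype.coe_lt_coe, hej]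
        exact hal
      have h2 : j < (⟨i+1, h⟩ : Fin (2*n)) := by
        rw [← e.lt_iff_lt, ← Subtype.coe_lt_coe, hej]
        exact hlb
      rw [Fin.lt_def] at h1 h2
      simp at h1 h2
      omega
    have hs := hsc a b hab hbm hsa hsb hmid
    show (-1:ℤ)^b * s b = -((-1:ℤ)^a * s a)
    rw [hs, ← mul_assoc, pow_key a b hab]
    ring
  have h0 : (0:ℕ) < 2*n := by omega
  set c := t (e ⟨0, h0⟩) with hc
  have halt : ∀ (i : ℕ) (h : i < 2*n), t (e ⟨i, h⟩) = (-1:ℤ)^i * c := by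
    intro i
    induction i with
    | zero => intro h; simp [hc]
    | succ i ih =>
      intro h
      have hi : i < 2*n := by omega
      rw [hstep i h, ih hi, pow_succ]
      ring
  have hcval : c = 1 ∨ c = -1 := by
    obtain ⟨hlt, hne⟩ := heMem ⟨0, h0⟩
    rcases hvals _ hlt with hv|hv|hv
    · rcases Nat.even_or_odd ((e ⟨0,h0⟩ : ℕ)) with hp|hp
      · right; rw [hc]; show (-1:ℤ)^((e ⟨0,h0⟩ : ℕ)) * s _ = -1
        rw [hp.neg_one_pow, hv]; ring
      · left; rw [hc]; show (-1:ℤ)^((e ⟨0,h0⟩ : ℕ)) * s _ = 1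
        rw [hp.neg_one_pow, hv]; ring
    · exact absurd hv hne
    · rcases Nat.even_or_odd ((e ⟨0,h0⟩ : ℕ)) with hp|hp
      · left; rw [hc]; show (-1:ℤ)^((e ⟨0,h0⟩ : ℕ)) * s _ = 1
        rw [hp.neg_one_pow, hv]; ring
      · right; rw [hc]; show (-1:ℤ)^((e ⟨0,h0⟩ : ℕ)) * s _ = -1
        rw [hp.neg_one_pow, hv]; ring
  -- membership characterizations
  have hS0 : S0 = (Finset.range m).filter (fun j => t j = 1) := rfl
  have hS1 : S1 = (Finset.range m).filter (fun j => t j = -1) := rfl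
  have htne : ∀ (j : ℕ) (v : ℤ), v = 1 ∨ v = -1 → (t j : ℤ) = v → s j ≠ 0 := by
    intro j v hv htj h0'
    have : t j = 0 := by rw [ht]; simp [h0']
    rcases hv with rfl|rfl <;> omega
  have hmemS0 : ∀ j, j ∈ S0 ↔ (j < m ∧ t j = 1) := by
    intro j; rw [hS0]; simp [Finset.mem_filter, Finset.mem_range]
  have hmemS1 : ∀ j, j ∈ S1 ↔ (j < m ∧ t j = -1) := by
    intro j; rw [hS1]; simp [Finset.mem_filter, Finset.mem_range]
  -- N as a map of univ
  have hinj : Function.Injective (fun i : Fin (2*n) => ((e i : ℕ))) := by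
    intro i j hij
    exact e.injective (Subtype.coe_injective hij)
  set f : Fin (2*n) ↪ ℕ := ⟨fun i => ((e i : ℕ)), hinj⟩ with hf
  have hNim : N = Finset.univ.map f := by
    ext x
    simp only [Finset.mem_map, Finset.mem_univ, true_and, hf, Function.Embedding.coeFn_mk]
    constructor
    · intro hx
      exact ⟨e.symm ⟨x, hx⟩, by simp⟩
    · rintro ⟨i, rfl⟩
      exact (e i).2
  have hfilterN : ∀ v : ℤ, v = 1 ∨ v = -1 →
      (Finset.range m).filter (fun j => t j = v) = N.filter (fun j => t j = v) := by
    intro v hv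
    ext j
    simp only [Finset.mem_filter, Finset.mem_range, hNmem]
    constructor
    · rintro ⟨h1, h2⟩; exact ⟨⟨h1, htne j v hv h2⟩, h2⟩
    · rintro ⟨⟨h1, _⟩, h2⟩; exact ⟨h1, h2⟩
  have hcardv : ∀ v : ℤ, v = 1 ∨ v = -1 →
      ((Finset.range m).filter (fun j => t j = v)).card
        = (Finset.univ.filter (fun i : Fin (2*n) => (-1:ℤ)^(i:ℕ) * c = v)).card := by
    intro v hv
    rw [hfilterN v hv, hNim, Finset.filter_map, Finset.card_map]
    congr 1
    apply Finset.filter_congr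
    intro i _
    show t (e i) = v ↔ (-1:ℤ)^(i:ℕ) * c = v
    have : t (e i) = (-1:ℤ)^(i:ℕ) * c := by
      have := halt i.1 i.2
      simpa using this
    rw [this]
  have hpow1 : ∀ i : ℕ, ((-1:ℤ)^i = 1 ↔ Even i) :=
    fun i => neg_one_pow_eq_one_iff_even (by norm_num)
  have hpowm1 : ∀ i : ℕ, ((-1:ℤ)^i = -1 ↔ ¬ Even i) := by
    intro i
    rcases Nat.even_or_odd i with hp|hp
    · rw [hp.neg_one_pow]; simp [hp]
    · rw [hp.neg_one_pow]; simp [Nat.not_even_iff_odd.mpr hp]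
  -- cards
  have hcard1 : S0.card = n := by
    rw [hS0, hcardv 1 (Or.inl rfl)]
    rcases hcval with hcv|hcv
    · have : (Finset.univ.filter (fun i : Fin (2*n) => (-1:ℤ)^(i:ℕ) * c = 1))
          = Finset.univ.filter (fun i : Fin (2*n) => Even (i:ℕ)) := by
        apply Finset.filter_congr; intro i _
        rw [hcv, mul_one]; exact hpow1 _
      rw [this, fin_even_card, even_card_range]
    · have : (Finset.univ.filter (fun i : Fin (2*n) => (-1:ℤ)^(i:ℕ) * c = 1))
          = Finset.univ.filter (fun i : Fin (2*n) => ¬ Even (i:ℕ)) := by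
        apply Finset.filter_congr; intro i _
        rw [hcv]
        constructor
        · intro h; rw [← hpowm1]; linarith
        · intro h; rw [← hpowm1] at h; rw [h]; ring
      rw [this, fin_odd_card, odd_card_range]
  have hcard2 : S1.card = n := by
    rw [hS1, hcardv (-1) (Or.inr rfl)]
    rcases hcval with hcv|hcv
    · have : (Finset.univ.filter (fun i : Fin (2*n) => (-1:ℤ)^(i:ℕ) * c = -1))
          = Finset.univ.filter (fun i : Fin (2*n) => ¬ Even (i:ℕ)) := by
        apply Finset.filter_congr; intro i _
        rw [hcv, mul_one]; exact hpowm1 _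
      rw [this, fin_odd_card, odd_card_range]
    · have : (Finset.univ.filter (fun i : Fin (2*n) => (-1:ℤ)^(i:ℕ) * c = -1))
          = Finset.univ.filter (fun i : Fin (2*n) => Even (i:ℕ)) := by
        apply Finset.filter_congr; intro i _
        rw [hcv]
        constructor
        · intro h; rw [← hpow1]; linarith
        · intro h; rw [← hpow1] at h; rw [h]; ring
      rw [this, fin_even_card, even_card_range]
  -- wrap lemma
  have hwrap : s 0 ≠ 0 → s (m-1) ≠ 0 → t (m-1) = - t 0 := by
    intro hs0 hsm
    have h0N : (0:ℕ) ∈ N := (hNmem 0).mpr ⟨by omega, hs0⟩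
    have hmN : (m-1) ∈ N := (hNmem (m-1)).mpr ⟨by omega, hsm⟩
    have hlast : 2*n - 1 < 2*n := by omega
    -- e ⟨0⟩ = 0
    have he0 : (e ⟨0, h0⟩ : ℕ) = 0 := by
      have hle : (⟨0, h0⟩ : Fin (2*n)) ≤ e.symm ⟨0, h0N⟩ := by
        rw [Fin.le_def]; exact Nat.zero_le _
      have h1 := e.monotone hle
      rw [OrderIso.apply_symm_apply] at h1
      have h2 : (e ⟨0, h0⟩ : ℕ) ≤ 0 := Subtype.coe_le_coe.mpr h1
      omega
    -- e ⟨2n-1⟩ = m-1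
    have heL : (e ⟨2*n-1, hlast⟩ : ℕ) = m - 1 := by
      have hle : e.symm ⟨m-1, hmN⟩ ≤ (⟨2*n-1, hlast⟩ : Fin (2*n)) := by
        have hv := (e.symm (⟨m-1, hmN⟩ : {x // x ∈ N})).2
        rw [Fin.le_def]
        exact (by omega : ((e.symm (⟨m-1, hmN⟩ : {x // x ∈ N})) : ℕ) ≤ 2*n-1)
      have h1 := e.monotone hle
      rw [OrderIso.apply_symm_apply] at h1
      have h3 : (m - 1 : ℕ) ≤ (e ⟨2*n-1, hlast⟩ : ℕ) := Subtype.coe_le_coe.mpr h1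
      have h2 := (heMem ⟨2*n-1, hlast⟩).1
      omega
    have h1 : t (m-1) = (-1:ℤ)^(2*n-1) * c := by
      rw [← heL]; exact halt _ _
    have h2 : t 0 = c := by rw [← he0]
    have hodd : Odd (2*n-1) := ⟨n-1, by omega⟩
    rw [h1, h2, hodd.neg_one_pow, neg_one_mul]
  -- stability
  have hstab : ∀ v : ℤ, v = 1 ∨ v = -1 → ∀ i, i < m → t i = v →
      ¬ ((i+1) % m < m ∧ t ((i+1) % m) = v) := by
    intro v hv i him hti
    rintro ⟨-, htj⟩
    by_cases hcase : i + 1 < m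
    · rw [Nat.mod_eq_of_lt hcase] at htj
      have hsi : s i ≠ 0 := htne i v hv hti
      have hsj : s (i+1) ≠ 0 := htne (i+1) v hv htj
      have hmid : ∀ l, i < l → l < i+1 → s l = 0 := by intro l h1 h2; omega
      have hs := hsc i (i+1) (by omega) hcase hsi hsj hmid
      have hred : i + 1 - i - 1 = 0 := by omega
      rw [hred, pow_zero, one_mul] at hs
      have : t (i+1) = - t i := by
        show (-1:ℤ)^(i+1) * s (i+1) = -((-1:ℤ)^i * s i)
        rw [hs, pow_succ]; ring
      rw [hti, htj] at this
      rcases hv with rfl|rfl <;> omega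
    · have him1 : i = m - 1 := by omega
      have hmod : (i+1) % m = 0 := by
        have : i + 1 = m := by omega
        rw [this, Nat.mod_self]
      rw [hmod] at htj
      have hsi : s (m-1) ≠ 0 := him1 ▸ htne i v hv hti
      have hs0 : s 0 ≠ 0 := htne 0 v hv htj
      have := hwrap hs0 hsi
      rw [him1] at hti
      rw [hti, htj] at this
      rcases hv with rfl|rfl <;> omega
  refine ⟨?_, hcard1, hcard2, ?_, ?_⟩
  · rw [Finset.disjoint_left]
    intro j hj0 hj1
    rw [hmemS0] at hj0
    rw [hmemS1] at hj1
    omega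
  · intro i hi hj
    rw [hmemS0] at hi hj
    exact hstab 1 (Or.inl rfl) i hi.1 hi.2 ⟨hj.1, hj.2⟩
  · intro i hi hj
    rw [hmemS1] at hi hj
    exact hstab (-1) (Or.inr rfl) i hi.1 hi.2 ⟨hj.1, hj.2⟩
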